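/- For every integer n ≥ 0, the limit as real s → ∞ of (1 - Q_n'(s)/ζ'(s))^{-1/s} equals p_{n+1}/2. -/

import Mathlib

open Filter Real

noncomputable def zetaR (s : ℝ) : ℝ := ∑' m : ℕ, (m : ℝ) ^ (-s)

/-- `P k` is the (k+1)-st prime: `P 0 = 2`, `P 1 = 3`, ... -/
noncomputable def P (k : ℕ) : ℕ := Nat.nth Nat.Prime k

/-- Partial Euler product `Q n s = ∏_{k=1}^n (1 - p_k^{-s})⁻¹`. -/
noncomputable def Q (n : ℕ) (s : ℝ) : ℝ := ∏ k ∈ Finset.range n, (1 - (P k : ℝ) ^ (-s))⁻¹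


lemma aux_log_le (m : ℕ) : Real.log m ≤ 2 * (m : ℝ) ^ ((1:ℝ)/2) := by
  rcases Nat.eq_zero_or_pos m with h | h
  · simp [h]
  · have hm : (0:ℝ) < m := by exact_mod_cast h
    have h1 : Real.log ((m:ℝ) ^ ((1:ℝ)/2)) ≤ (m:ℝ) ^ ((1:ℝ)/2) - 1 :=
      Real.log_le_sub_one_of_pos (Real.rpow_pos_of_pos hm _)
    rw [Real.log_rpow hm] at h1
    nlinarith [Real.rpow_nonneg hm.le ((1:ℝ)/2)]

lemma aux_summable_u : Summable (fun m : ℕ => 2 * (m : ℝ) ^ (-(3:ℝ)/2)) :=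
  (Real.summable_nat_rpow.mpr (by norm_num)).mul_left 2

lemma aux_summable_rpow {s : ℝ} (hs : 1 < s) : Summable (fun m : ℕ => (m : ℝ) ^ (-s)) :=
  Real.summable_nat_rpow.mpr (by linarith)

lemma rpow_half_mul (m : ℕ) : (m:ℝ) ^ ((1:ℝ)/2) * (m:ℝ) ^ (-(2:ℝ)) = (m:ℝ) ^ (-(3:ℝ)/2) := by
  rcases Nat.eq_zero_or_pos m with h | h
  · norm_num [h, Real.zero_rpow]
  · have hm : (0:ℝ) < m := by exact_mod_cast h
    rw [← Real.rpow_add hm]; norm_num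

lemma aux_bound_f {m : ℕ} {s : ℝ} (hs : 2 ≤ s) :
    Real.log m * (m : ℝ) ^ (-s) ≤ 2 * (m : ℝ) ^ (-(3:ℝ)/2) := by
  rcases Nat.eq_zero_or_pos m with h | h
  · simp [h, Real.zero_rpow (by norm_num : -(3:ℝ)/2 ≠ 0),
      Real.zero_rpow (by intro hh; linarith : -s ≠ 0)]
  · have hm1 : (1:ℝ) ≤ m := by exact_mod_cast h
    have h1 : (m:ℝ) ^ (-s) ≤ (m:ℝ) ^ (-(2:ℝ)) :=
      Real.rpow_le_rpow_of_exponent_le hm1 (by linarith)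
    calc Real.log m * (m:ℝ) ^ (-s) ≤ Real.log m * (m:ℝ) ^ (-(2:ℝ)) :=
          mul_le_mul_of_nonneg_left h1 (Real.log_natCast_nonneg m)
      _ ≤ (2 * (m:ℝ) ^ ((1:ℝ)/2)) * (m:ℝ) ^ (-(2:ℝ)) :=
          mul_le_mul_of_nonneg_right (aux_log_le m) (Real.rpow_nonneg (by positivity) _)
      _ = 2 * (m:ℝ) ^ (-(3:ℝ)/2) := by rw [mul_assoc, rpow_half_mul]

lemma aux_f_nonneg (m : ℕ) (s : ℝ) : 0 ≤ Real.log m * (m : ℝ) ^ (-s) :=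
  mul_nonneg (Real.log_natCast_nonneg m) (Real.rpow_nonneg (by positivity) _)

lemma aux_summable_f {s : ℝ} (hs : 2 ≤ s) :
    Summable (fun m : ℕ => Real.log m * (m : ℝ) ^ (-s)) :=
  Summable.of_nonneg_of_le (fun m => aux_f_nonneg m s) (fun m => aux_bound_f hs) aux_summable_u

lemma aux_hasDerivAt (m : ℕ) {s : ℝ} (hs : 2 < s) :
    HasDerivAt (fun y : ℝ => (m : ℝ) ^ (-y)) (-(Real.log m * (m : ℝ) ^ (-s))) s := by
  rcases Nat.eq_zero_or_pos m with h | h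
  · subst h
    have hev : (fun y : ℝ => ((0:ℕ) : ℝ) ^ (-y)) =ᶠ[nhds s] (fun _ => (0:ℝ)) := by
      filter_upwards [IsOpen.mem_nhds isOpen_Ioi hs] with y hy
      simp [Real.zero_rpow (by intro hh; simp at hy; linarith : -y ≠ 0)]
    have := (hasDerivAt_const s (0:ℝ)).congr_of_eventuallyEq hev
    simpa [Real.zero_rpow (by intro hh; linarith : -s ≠ 0)] using this
  · have hm : (0:ℝ) < m := by exact_mod_cast h
    have h1 := (Real.hasStrictDerivAt_const_rpow hm (-s)).hasDerivAt
    have h2 : HasDerivAt (fun y : ℝ => -y) (-1) s := (hasDerivAt_id s).neg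
    have := h1.comp s h2
    exact this.congr_deriv (by ring)


lemma aux_norm_bound (m : ℕ) {s : ℝ} (hs : s ∈ Set.Ioi (2:ℝ)) :
    ‖-(Real.log m * (m : ℝ) ^ (-s))‖ ≤ 2 * (m : ℝ) ^ (-(3:ℝ)/2) := by
  rw [norm_neg, Real.norm_of_nonneg (aux_f_nonneg m s)]
  exact aux_bound_f (le_of_lt hs)

lemma zetaR_hasDerivAt {s : ℝ} (hs : 2 < s) :
    HasDerivAt zetaR (∑' m : ℕ, -(Real.log m * (m : ℝ) ^ (-s))) s := by
  have := hasDerivAt_tsum_of_isPreconnected aux_summable_u isOpen_Ioi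
    (isPreconnected_Ioi)
    (g := fun (m : ℕ) (y : ℝ) => (m : ℝ) ^ (-y))
    (g' := fun (m : ℕ) (y : ℝ) => -(Real.log m * (m : ℝ) ^ (-y)))
    (fun m y hy => aux_hasDerivAt m hy)
    (fun m y hy => aux_norm_bound m hy)
    (y₀ := 3) (by norm_num)
    (aux_summable_rpow (by norm_num : (1:ℝ) < 3))
    hs
  exact this

lemma zetaR_deriv {s : ℝ} (hs : 2 < s) :
    deriv zetaR s = -∑' m : ℕ, Real.log m * (m : ℝ) ^ (-s) := by
  rw [(zetaR_hasDerivAt hs).deriv, tsum_neg]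

noncomputable def rpowHom (s : ℝ) : ℕ →* ℝ where
  toFun m := (m : ℝ) ^ (-s)
  map_one' := by simp
  map_mul' m k := by
    push_cast
    exact Real.mul_rpow (by positivity) (by positivity)

lemma prod_primesBelow_nth (g : ℕ → ℝ) (n : ℕ) :
    ∏ p ∈ (Nat.nth Nat.Prime n).primesBelow, g p
      = ∏ k ∈ Finset.range n, g (Nat.nth Nat.Prime k) := by
  have hinf := Nat.infinite_setOf_prime
  refine Finset.prod_nbij' (fun p => Nat.count Nat.Prime p) (fun k => Nat.nth Nat.Prime k)
    ?_ ?_ ?_ ?_ ?_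
  · intro p hp
    rw [Nat.mem_primesBelow] at hp
    rw [Finset.mem_range, ← Nat.nth_lt_nth hinf, Nat.nth_count hp.2]
    exact hp.1
  · intro k hk
    rw [Finset.mem_range] at hk
    exact Nat.mem_primesBelow.mpr ⟨(Nat.nth_lt_nth hinf).mpr hk, Nat.prime_nth_prime k⟩
  · intro p hp
    exact Nat.nth_count (Nat.mem_primesBelow.mp hp).2
  · intro k _
    exact Nat.count_nth (fun hf => absurd hf hinf)
  · intro p hp
    rw [Nat.nth_count (Nat.mem_primesBelow.mp hp).2]

lemma Q_eq_tsum (n : ℕ) {s : ℝ} (hs : 1 < s) :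
    Q n s = ∑' m : (P n).smoothNumbers, ((m : ℕ) : ℝ) ^ (-s) := by
  have hsum : Summable (⇑(rpowHom s)) := aux_summable_rpow hs
  have := EulerProduct.prod_primesBelow_geometric_eq_tsum_smoothNumbers hsum (P n)
  have h2 : (∑' m : (P n).smoothNumbers, (rpowHom s) (m : ℕ))
      = ∑' m : (P n).smoothNumbers, ((m : ℕ) : ℝ) ^ (-s) := rfl
  rw [← h2, ← this, Q, P, prod_primesBelow_nth (fun p => (1 - (rpowHom s) p)⁻¹) n]
  rfl

lemma Q_hasDerivAt (n : ℕ) {s : ℝ} (hs : 2 < s) :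
    HasDerivAt (Q n)
      (∑' m : (P n).smoothNumbers, -(Real.log m * ((m : ℕ) : ℝ) ^ (-s))) s := by
  have hu : Summable (fun m : (P n).smoothNumbers => 2 * ((m : ℕ) : ℝ) ^ (-(3:ℝ)/2)) :=
    aux_summable_u.subtype _
  have hF : HasDerivAt (fun y : ℝ => ∑' m : (P n).smoothNumbers, ((m : ℕ) : ℝ) ^ (-y))
      (∑' m : (P n).smoothNumbers, -(Real.log m * ((m : ℕ) : ℝ) ^ (-s))) s := by
    exact hasDerivAt_tsum_of_isPreconnected hu isOpen_Ioi isPreconnected_Ioi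
      (g := fun (m : (P n).smoothNumbers) (y : ℝ) => ((m : ℕ) : ℝ) ^ (-y))
      (g' := fun (m : (P n).smoothNumbers) (y : ℝ) => -(Real.log m * ((m : ℕ) : ℝ) ^ (-y)))
      (fun m y hy => aux_hasDerivAt (m : ℕ) hy)
      (fun m y hy => aux_norm_bound (m : ℕ) hy)
      (y₀ := 3) (by norm_num)
      ((aux_summable_rpow (by norm_num : (1:ℝ) < 3)).subtype _)
      hs
  refine hF.congr_of_eventuallyEq ?_
  filter_upwards [IsOpen.mem_nhds isOpen_Ioi hs] with y hy
  exact Q_eq_tsum n (by simpa using lt_trans one_lt_two hy)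

lemma Q_deriv (n : ℕ) {s : ℝ} (hs : 2 < s) :
    deriv (Q n) s
      = -∑' m : ℕ, ((P n).smoothNumbers).indicator
          (fun m => Real.log m * (m : ℝ) ^ (-s)) m := by
  rw [(Q_hasDerivAt n hs).deriv, tsum_neg,
    ← tsum_subtype ((P n).smoothNumbers) (fun m => Real.log m * (m : ℝ) ^ (-s))]


lemma aux_rpow_shift {a m : ℕ} {s : ℝ} (hs : 2 ≤ s) (ha : 0 < a) :
    (m : ℝ) ^ (-s) * (a : ℝ) ^ s = ((a : ℝ) / m) ^ s := by
  have hs0 : s ≠ 0 := by linarith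
  rcases Nat.eq_zero_or_pos m with h | h
  · simp [h, Real.zero_rpow (neg_ne_zero.mpr hs0), Real.zero_rpow hs0]
  · have hm : (0:ℝ) < m := by exact_mod_cast h
    rw [Real.div_rpow (by positivity) hm.le, Real.rpow_neg hm.le]
    ring

lemma term_bound {a m : ℕ} (ha : 2 ≤ a) (hm : a + 1 ≤ m) {s : ℝ} (hs : 2 ≤ s) :
    Real.log m * ((a:ℝ)/m) ^ s
      ≤ ((a:ℝ)/(a+1)) ^ (s-2) * ((a:ℝ) ^ (2:ℝ) * (2 * (m:ℝ) ^ (-(3:ℝ)/2))) := by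
  have hA : (0:ℝ) < a := by exact_mod_cast lt_of_lt_of_le two_pos ha
  have hM : (0:ℝ) < m := by exact_mod_cast lt_of_lt_of_le (Nat.succ_pos a) hm
  have hAM : (a:ℝ) + 1 ≤ m := by exact_mod_cast hm
  have hq : (0:ℝ) < (a:ℝ)/m := by positivity
  have h1 : ((a:ℝ)/m) ^ s = ((a:ℝ)/m) ^ (s-2) * ((a:ℝ)/m) ^ (2:ℝ) := by
    rw [← Real.rpow_add hq]; ring_nf
  have h2 : ((a:ℝ)/m) ^ (s-2) ≤ ((a:ℝ)/(a+1)) ^ (s-2) := by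
    apply Real.rpow_le_rpow hq.le _ (by linarith)
    apply div_le_div_of_nonneg_left hA.le (by positivity) hAM
  have h3 : ((a:ℝ)/m) ^ (2:ℝ) = (a:ℝ) ^ (2:ℝ) * (m:ℝ) ^ (-(2:ℝ)) := by
    rw [Real.div_rpow hA.le hM.le, Real.rpow_neg hM.le]
    ring
  calc Real.log m * ((a:ℝ)/m) ^ s
      ≤ (2 * (m:ℝ) ^ ((1:ℝ)/2)) * (((a:ℝ)/(a+1)) ^ (s-2) * ((a:ℝ)/m) ^ (2:ℝ)) := by
        rw [h1]
        apply mul_le_mul (aux_log_le m)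
          (mul_le_mul_of_nonneg_right h2 (Real.rpow_nonneg hq.le _))
          (by positivity) (by positivity)
    _ = ((a:ℝ)/(a+1)) ^ (s-2) * ((a:ℝ) ^ (2:ℝ) * (2 * ((m:ℝ) ^ ((1:ℝ)/2) * (m:ℝ) ^ (-(2:ℝ))))) := by
        rw [h3]; ring
    _ = _ := by rw [rpow_half_mul]

lemma tail_tendsto (T : Set ℕ) (a : ℕ) (ha2 : 2 ≤ a) (haT : a ∈ T)
    (hT : ∀ m ∈ T, m ≠ 0 → m ≠ 1 → a ≤ m) :
    Tendsto (fun s : ℝ =>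
        (∑' m : ℕ, T.indicator (fun m => Real.log m * (m:ℝ) ^ (-s)) m) * (a:ℝ) ^ s)
      atTop (nhds (Real.log a)) := by
  have hA : (0:ℝ) < a := by exact_mod_cast lt_of_lt_of_le two_pos ha2
  have ha0 : a ≠ 0 := by omega
  set C : ℝ := ∑' m : ℕ, 2 * (m : ℝ) ^ (-(3:ℝ)/2) with hC
  set r : ℝ := (a:ℝ)/(a+1) with hr
  have hr0 : 0 < r := by positivity
  have hr1 : r < 1 := by
    rw [hr, div_lt_one (by positivity)]; linarith
  -- the remainder function
  set R : ℝ → ℝ := fun s => ∑' m : ℕ,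
      if m = a then 0 else T.indicator (fun m => Real.log m * ((a:ℝ)/m) ^ s) m with hR
  -- pointwise form of the main quantity
  have hh : ∀ s : ℝ, 2 ≤ s → ∀ m : ℕ,
      T.indicator (fun m => Real.log m * (m:ℝ) ^ (-s)) m * (a:ℝ) ^ s
        = T.indicator (fun m => Real.log m * ((a:ℝ)/m) ^ s) m := by
    intro s hs m
    by_cases hm : m ∈ T
    · rw [Set.indicator_of_mem hm, Set.indicator_of_mem hm, mul_assoc,
        aux_rpow_shift hs (by omega)]
    · simp [Set.indicator_of_notMem hm]
  have hsumh : ∀ s : ℝ, 2 ≤ s →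
      Summable (fun m : ℕ => T.indicator (fun m => Real.log m * ((a:ℝ)/m) ^ s) m) := by
    intro s hs
    exact Summable.congr (((aux_summable_f hs).indicator T).mul_right ((a:ℝ) ^ s))
      (fun m => by
        have := hh s hs m
        simpa [Set.indicator_mul_right] using this)
  have hXeq : ∀ s : ℝ, 2 ≤ s →
      (∑' m : ℕ, T.indicator (fun m => Real.log m * (m:ℝ) ^ (-s)) m) * (a:ℝ) ^ s
        = Real.log a + R s := by
    intro s hs
    rw [← tsum_mul_right]
    rw [tsum_congr (hh s hs)]
    rw [Summable.tsum_eq_add_tsum_ite (hsumh s hs) a]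
    congr 1
    rw [Set.indicator_of_mem haT, div_self (by positivity : (a:ℝ) ≠ 0), Real.one_rpow, mul_one]
  -- termwise bound for the remainder
  have hterm : ∀ s : ℝ, 2 ≤ s → ∀ m : ℕ,
      (if m = a then 0 else T.indicator (fun m => Real.log m * ((a:ℝ)/m) ^ s) m)
        ≤ r ^ (s-2) * ((a:ℝ) ^ (2:ℝ) * (2 * (m:ℝ) ^ (-(3:ℝ)/2))) := by
    intro s hs m
    have hRHS : 0 ≤ r ^ (s-2) * ((a:ℝ) ^ (2:ℝ) * (2 * (m:ℝ) ^ (-(3:ℝ)/2))) := by positivity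
    by_cases hma : m = a
    · simpa [hma] using hRHS
    · rw [if_neg hma]
      by_cases hm : m ∈ T
      · rw [Set.indicator_of_mem hm]
        rcases eq_or_ne m 0 with h0 | h0
        · simpa [h0] using hRHS
        rcases eq_or_ne m 1 with h1 | h1
        · simpa [h1] using hRHS
        have ham : a + 1 ≤ m := by
          have := hT m hm h0 h1
          omega
        exact term_bound ha2 ham hs
      · simpa [Set.indicator_of_notMem hm] using hRHS
  have hterm_nonneg : ∀ s : ℝ, ∀ m : ℕ,
      0 ≤ (if m = a then 0 else T.indicator (fun m => Real.log m * ((a:ℝ)/m) ^ s) m) := by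
    intro s m
    by_cases hma : m = a
    · simp [hma]
    · rw [if_neg hma]
      apply Set.indicator_nonneg
      intro x _
      have hx : (0:ℝ) ≤ (a:ℝ)/x := by positivity
      exact mul_nonneg (Real.log_natCast_nonneg x) (Real.rpow_nonneg hx _)
  have hsumRHS : ∀ s : ℝ, Summable (fun m : ℕ =>
      r ^ (s-2) * ((a:ℝ) ^ (2:ℝ) * (2 * (m:ℝ) ^ (-(3:ℝ)/2)))) := by
    intro s
    exact (aux_summable_u.mul_left ((a:ℝ) ^ (2:ℝ))).mul_left (r ^ (s-2))
  have hRle : ∀ s : ℝ, 2 ≤ s → R s ≤ r ^ (s-2) * ((a:ℝ) ^ (2:ℝ) * C) := by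
    intro s hs
    have h1 : R s ≤ ∑' m : ℕ, r ^ (s-2) * ((a:ℝ) ^ (2:ℝ) * (2 * (m:ℝ) ^ (-(3:ℝ)/2))) := by
      apply Summable.tsum_le_tsum (hterm s hs)
      · exact Summable.of_nonneg_of_le (hterm_nonneg s) (hterm s hs) (hsumRHS s)
      · exact hsumRHS s
    calc R s ≤ _ := h1
      _ = r ^ (s-2) * ((a:ℝ) ^ (2:ℝ) * C) := by
        rw [hC, tsum_mul_left, tsum_mul_left]
  have hRnonneg : ∀ s : ℝ, 0 ≤ R s := fun s => tsum_nonneg (hterm_nonneg s)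
  -- the bound tends to 0
  have hbound : Tendsto (fun s : ℝ => r ^ (s-2) * ((a:ℝ) ^ (2:ℝ) * C)) atTop (nhds 0) := by
    have h1 : Tendsto (fun s : ℝ => s - 2) atTop atTop :=
      tendsto_atTop_add_const_right atTop (-2) tendsto_id
    have h2 : Tendsto (fun s : ℝ => r ^ (s-2)) atTop (nhds 0) :=
      (tendsto_rpow_atTop_of_base_lt_one r (by linarith) hr1).comp h1
    simpa using h2.mul_const ((a:ℝ) ^ (2:ℝ) * C)
  have hR0 : Tendsto R atTop (nhds 0) := by
    apply squeeze_zero' (Eventually.of_forall hRnonneg) _ hbound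
    filter_upwards [eventually_ge_atTop (2:ℝ)] with s hs
    exact hRle s hs
  have : Tendsto (fun s : ℝ => Real.log a + R s) atTop (nhds (Real.log a)) := by
    simpa using tendsto_const_nhds.add hR0
  apply Tendsto.congr' _ this
  filter_upwards [eventually_ge_atTop (2:ℝ)] with s hs
  exact (hXeq s hs).symm


theorem half_prime_limit (n : ℕ) :
    Tendsto (fun s : ℝ => (1 - deriv (Q n) s / deriv zetaR s) ^ (-1 / s)) atTop
      (nhds ((P n : ℝ) / 2)) := by
  classical
  set p : ℕ := P n with hpdef
  have hp : p.Prime := Nat.prime_nth_prime n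
  have hp2 : 2 ≤ p := hp.two_le
  have hppos : (0:ℝ) < p := by exact_mod_cast hp.pos
  set S : Set ℕ := (P n).smoothNumbers with hS
  set num : ℝ → ℝ := fun s =>
    ∑' m : ℕ, (Sᶜ).indicator (fun m => Real.log m * (m:ℝ) ^ (-s)) m with hnum
  set l : ℝ → ℝ := fun s => ∑' m : ℕ, Real.log m * (m:ℝ) ^ (-s) with hl
  -- limit of the numerator scaled
  have hpSc : p ∈ Sᶜ := by
    intro hmem
    have := (Nat.mem_smoothNumbers'.mp hmem) p hp dvd_rfl
    exact lt_irrefl p this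
  have hScbound : ∀ m ∈ Sᶜ, m ≠ 0 → m ≠ 1 → p ≤ m := by
    intro m hm h0 _
    by_contra hlt
    push_neg at hlt
    exact hm (Nat.mem_smoothNumbers_of_lt (Nat.pos_of_ne_zero h0) hlt)
  have hA : Tendsto (fun s : ℝ => num s * (p:ℝ) ^ s) atTop (nhds (Real.log p)) :=
    tail_tendsto Sᶜ p hp2 hpSc hScbound
  have hB : Tendsto (fun s : ℝ => l s * (2:ℝ) ^ s) atTop (nhds (Real.log 2)) := by
    have := tail_tendsto Set.univ 2 le_rfl (Set.mem_univ 2) (fun m _ h0 h1 => by omega)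
    simpa using this
  have hlogp : (0:ℝ) < Real.log p := Real.log_pos (by exact_mod_cast hp.one_lt)
  have hlog2 : (0:ℝ) < Real.log 2 := Real.log_pos one_lt_two
  -- eventual positivity
  have hposA : ∀ᶠ s : ℝ in atTop, 0 < num s * (p:ℝ) ^ s :=
    hA.eventually (eventually_gt_nhds hlogp)
  have hposB : ∀ᶠ s : ℝ in atTop, 0 < l s * (2:ℝ) ^ s :=
    hB.eventually (eventually_gt_nhds hlog2)
  -- limit of the exponent expression
  have hlim : Tendsto (fun s : ℝ =>
      Real.exp ((Real.log (l s * (2:ℝ) ^ s) - Real.log (num s * (p:ℝ) ^ s)) * s⁻¹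
        + (Real.log p - Real.log 2))) atTop (nhds ((p:ℝ) / 2)) := by
    have h1 : Tendsto (fun s : ℝ =>
        Real.log (l s * (2:ℝ) ^ s) - Real.log (num s * (p:ℝ) ^ s)) atTop
        (nhds (Real.log (Real.log 2) - Real.log (Real.log p))) :=
      (hB.log hlog2.ne').sub (hA.log hlogp.ne')
    have h2 : Tendsto (fun s : ℝ =>
        (Real.log (l s * (2:ℝ) ^ s) - Real.log (num s * (p:ℝ) ^ s)) * s⁻¹) atTop (nhds 0) := by
      simpa using h1.mul tendsto_inv_atTop_zero
    have h3 := h2.add_const (Real.log p - Real.log 2)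
    rw [zero_add] at h3
    have h4 := (Real.continuous_exp.tendsto _).comp h3
    have h5 : Real.exp (Real.log p - Real.log 2) = (p:ℝ) / 2 := by
      rw [Real.exp_sub, Real.exp_log hppos, Real.exp_log two_pos]
    rw [h5] at h4
    exact h4
  -- eventual equality of the two expressions
  apply Tendsto.congr' _ hlim
  filter_upwards [hposA, hposB, eventually_gt_atTop (2:ℝ)] with s hApos hBpos hs2
  have hs0 : (0:ℝ) < s := by linarith
  have hps : (0:ℝ) < (p:ℝ) ^ s := Real.rpow_pos_of_pos hppos s
  have h2s : (0:ℝ) < (2:ℝ) ^ s := Real.rpow_pos_of_pos two_pos s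
  have hnumpos : 0 < num s := by nlinarith
  have hlpos : 0 < l s := by nlinarith
  -- identify the expression
  have hd : l s - (∑' m : ℕ, S.indicator (fun m => Real.log m * (m:ℝ) ^ (-s)) m) = num s := by
    rw [hl, hnum]
    rw [← Summable.tsum_sub (aux_summable_f hs2.le) ((aux_summable_f hs2.le).indicator S)]
    apply tsum_congr
    intro m
    by_cases hm : m ∈ S
    · rw [Set.indicator_of_mem hm, Set.indicator_of_notMem (by simpa using hm), sub_self]
    · rw [Set.indicator_of_notMem hm, Set.indicator_of_mem (by simpa using hm), sub_zero]
  have hE : 1 - deriv (Q n) s / deriv zetaR s = num s / l s := by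
    rw [Q_deriv n hs2, zetaR_deriv hs2, neg_div_neg_eq, one_sub_div hlpos.ne', ← hS, hd]
  rw [hE]
  -- turn rpow into exp
  have hdivpos : 0 < num s / l s := div_pos hnumpos hlpos
  rw [Real.rpow_def_of_pos hdivpos]
  congr 1
  have hlognum : Real.log (num s) = Real.log (num s * (p:ℝ) ^ s) - s * Real.log p := by
    rw [Real.log_mul hnumpos.ne' hps.ne', Real.log_rpow hppos]
    ring
  have hlogl : Real.log (l s) = Real.log (l s * (2:ℝ) ^ s) - s * Real.log 2 := by
    rw [Real.log_mul hlpos.ne' h2s.ne', Real.log_rpow two_pos]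
    ring
  rw [Real.log_div hnumpos.ne' hlpos.ne', hlognum, hlogl]
  field_simp
  ring
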